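/- Let A = (a_{ij}) be a symmetric n×n real matrix with nonnegative entries and zero diagonal such that the graph on {1, ..., n} whose edges are the pairs with a_{ij} > 0 is connected, and let θ ∈ ℝ^n satisfy |θ_i − θ_j| < π/2 whenever a_{ij} > 0. Then the weighted Laplacian matrix L(θ) defined by L(θ)_{ij} = −a_{ij} cos(θ_i − θ_j) for i ≠ j and L(θ)_{ii} = Σ_{j ≠ i} a_{ij} cos(θ_i − θ_j) is positive semidefinite and its kernel is exactly the one-dimensional span of the all-ones vector. (This matrix is the negative of the Jacobian of the Kuramoto dynamics at θ, so an equilibrium with all edge phase differences strictly less than π/2 in absolute value is locally exponentially stable modulo the rotational direction.) -/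

import Mathlib

/-- The weighted Laplacian `L(θ)` of the Kuramoto dynamics at state `θ`:
`L(θ)_{ij} = -a_{ij} cos(θ_i - θ_j)` for `i ≠ j` and
`L(θ)_{ii} = Σ_{l ≠ i} a_{il} cos(θ_i - θ_l)`. -/
noncomputable def kuramotoLaplacian (n : ℕ) (A : Matrix (Fin n) (Fin n) ℝ)
    (θ : Fin n → ℝ) : Matrix (Fin n) (Fin n) ℝ :=
  Matrix.of fun i j =>
    if i = j then ∑ l ∈ Finset.univ.erase i, A i l * Real.cos (θ i - θ l)
    else -(A i j * Real.cos (θ i - θ j))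

/-- for a symmetric nonnegative weight matrix with zero diagonal and connected
positive-weight graph, if all edge phase differences satisfy `|θ_i - θ_j| < π/2`, then the
weighted Laplacian `L(θ)` is positive semidefinite and its kernel is exactly the span of
the all-ones vector. -/
lemma lap_mulVec (n : ℕ) (A : Matrix (Fin n) (Fin n) ℝ) (θ : Fin n → ℝ)
    (x : Fin n → ℝ) (i : Fin n) :
    (kuramotoLaplacian n A θ).mulVec x i
      = ∑ j, A i j * Real.cos (θ i - θ j) * (x i - x j) := by
  simp only [Matrix.mulVec, dotProduct, kuramotoLaplacian, Matrix.of_apply]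
  rw [← Finset.sum_erase_add _ _ (Finset.mem_univ i),
      ← Finset.sum_erase_add _ (fun j => A i j * Real.cos (θ i - θ j) * (x i - x j))
        (Finset.mem_univ i)]
  simp only [eq_self_iff_true, if_true, sub_self, mul_zero, add_zero]
  rw [Finset.sum_mul, ← Finset.sum_add_distrib]
  refine Finset.sum_congr rfl fun j hj => ?_
  rw [if_neg (Finset.ne_of_mem_erase hj).symm]
  ring

theorem kuramoto_laplacian_posSemidef_ker_span_one (n : ℕ)
    (A : Matrix (Fin n) (Fin n) ℝ) (hsymm : A.IsSymm)
    (hnonneg : ∀ i j, 0 ≤ A i j) (hdiag : ∀ i, A i i = 0)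
    (hconn : (SimpleGraph.fromRel (fun i j : Fin n => 0 < A i j)).Connected)
    (θ : Fin n → ℝ)
    (hcoh : ∀ i j, 0 < A i j → |θ i - θ j| < Real.pi / 2) :
    (kuramotoLaplacian n A θ).PosSemidef ∧
    (∀ x : Fin n → ℝ,
      (kuramotoLaplacian n A θ).mulVec x = 0 ↔ ∃ c : ℝ, x = fun _ => c) := by
  set w : Fin n → Fin n → ℝ := fun i j => A i j * Real.cos (θ i - θ j) with hw
  have hAsymm : ∀ i j, A j i = A i j := hsymm.apply
  have hwsymm : ∀ i j, w j i = w i j := by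
    intro i j
    simp only [hw, hAsymm i j]
    rw [← Real.cos_neg (θ j - θ i), neg_sub]
  have hwpos : ∀ i j, 0 < A i j → 0 < w i j := by
    intro i j h
    have hc := abs_lt.mp (hcoh i j h)
    exact mul_pos h (Real.cos_pos_of_mem_Ioo ⟨by linarith [hc.1], hc.2⟩)
  have hwnn : ∀ i j, 0 ≤ w i j := by
    intro i j
    rcases (hnonneg i j).eq_or_lt with h | h
    · simp [hw, ← h]
    · exact (hwpos i j h).le
  -- quadratic form
  have hquad : ∀ x : Fin n → ℝ,
      2 * (dotProduct x ((kuramotoLaplacian n A θ).mulVec x))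
        = ∑ i, ∑ j, w i j * (x i - x j) ^ 2 := by
    intro x
    have h1 : dotProduct x ((kuramotoLaplacian n A θ).mulVec x)
        = ∑ i, ∑ j, w i j * (x i * (x i - x j)) := by
      simp only [dotProduct, lap_mulVec, Finset.mul_sum]
      refine Finset.sum_congr rfl fun i _ => Finset.sum_congr rfl fun j _ => by ring
    have h2 : ∑ i, ∑ j, w i j * (x i * (x i - x j))
        = ∑ i, ∑ j, w i j * (x j * (x j - x i)) := by
      rw [Finset.sum_comm]
      refine Finset.sum_congr rfl fun i _ => Finset.sum_congr rfl fun j _ => ?_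
      rw [hwsymm i j]
    rw [h1, two_mul]
    nth_rewrite 2 [h2]
    rw [← Finset.sum_add_distrib]
    refine Finset.sum_congr rfl fun i _ => ?_
    rw [← Finset.sum_add_distrib]
    refine Finset.sum_congr rfl fun j _ => by ring
  have hqnn : ∀ x : Fin n → ℝ, 0 ≤ dotProduct x ((kuramotoLaplacian n A θ).mulVec x) := by
    intro x
    have : 0 ≤ ∑ i, ∑ j, w i j * (x i - x j) ^ 2 :=
      Finset.sum_nonneg fun i _ => Finset.sum_nonneg fun j _ =>
        mul_nonneg (hwnn i j) (sq_nonneg _)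
    nlinarith [hquad x]
  have hherm : (kuramotoLaplacian n A θ).IsHermitian := by
    ext i j
    simp only [Matrix.conjTranspose_apply, kuramotoLaplacian, Matrix.of_apply, star_trivial]
    rcases eq_or_ne i j with h | h
    · subst h; rfl
    · rw [if_neg h.symm, if_neg h, hAsymm i j, ← Real.cos_neg (θ j - θ i), neg_sub]
  have hpsd : (kuramotoLaplacian n A θ).PosSemidef := by
    refine Matrix.PosSemidef.of_dotProduct_mulVec_nonneg hherm fun x => ?_
    simpa using hqnn x
  refine ⟨hpsd, fun x => ⟨fun hx => ?_, fun ⟨c, hc⟩ => ?_⟩⟩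
  · -- kernel → constant
    have hq0 : ∑ i, ∑ j, w i j * (x i - x j) ^ 2 = 0 := by
      rw [← hquad x, hx]; simp
    have hterm : ∀ i j, w i j * (x i - x j) ^ 2 = 0 := by
      intro i j
      have h1 := (Finset.sum_eq_zero_iff_of_nonneg
        (fun i _ => Finset.sum_nonneg fun j _ =>
          mul_nonneg (hwnn i j) (sq_nonneg _))).mp hq0 i (Finset.mem_univ i)
      exact (Finset.sum_eq_zero_iff_of_nonneg
        (fun j _ => mul_nonneg (hwnn i j) (sq_nonneg _))).mp h1 j (Finset.mem_univ j)
    have hedge : ∀ i j, 0 < A i j → x i = x j := by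
      intro i j h
      have := hterm i j
      have hne := (hwpos i j h).ne'
      have : (x i - x j) ^ 2 = 0 := by
        rcases mul_eq_zero.mp this with h' | h'
        · exact absurd h' hne
        · exact h'
      have := pow_eq_zero_iff (n := 2) (by norm_num) |>.mp this
      linarith [sub_eq_zero.mp this]
    have hreach : ∀ i j : Fin n,
        (SimpleGraph.fromRel (fun i j : Fin n => 0 < A i j)).Reachable i j → x i = x j := by
      intro i j hr
      obtain ⟨p⟩ := hr
      induction p with
      | nil => rfl
      | @cons u v w' h p ih =>
        have : x u = x v := by
          rcases h.2 with h' | h'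
          · exact hedge u v h'
          · exact (hedge v u h').symm
        rw [this, ih]
    have : Nonempty (Fin n) := hconn.nonempty
    obtain ⟨i0⟩ := this
    exact ⟨x i0, funext fun j => (hreach i0 j (hconn i0 j)).symm⟩
  · -- constant → kernel
    subst hc
    funext i
    rw [lap_mulVec]
    simp
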